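/- Let H and H̃ be d×d symmetric positive definite real matrices with (1−ε)H ⪯ H̃ ⪯ (1+ε)H for some ε ∈ (0, 1), let g ∈ ℝ^d, and define φ(p) = pᵀHp − 2pᵀg with minimizer p* = H⁻¹g. Let p̃ = H̃⁻¹g, let ε₀ ∈ (0, 1) with ε + ε₀ < 1, and suppose p̃′ ∈ ℝ^d satisfies ‖H̃^{1/2}(p̃′ − p̃)‖₂ ≤ ε₀·‖H̃^{1/2}p̃‖₂. Then min_p φ(p) ≤ φ(p̃′) ≤ (1 − α₀²)·min_p φ(p), where α₀ = (ε + ε₀)/(1 − ε − ε₀). -/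

import Mathlib

open Matrix

noncomputable section

open scoped ComplexOrder in
/-- The positive semidefinite square root of a positive semidefinite matrix
(the definition from the older Mathlib, removed since). -/
def Matrix.PosSemidef.sqrt {n 𝕜 : Type*} [Fintype n] [RCLike 𝕜] [DecidableEq n]
    {A : Matrix n n 𝕜} (hA : A.PosSemidef) : Matrix n n 𝕜 :=
  hA.1.eigenvectorUnitary.1 * diagonal ((↑) ∘ (√·) ∘ hA.1.eigenvalues) *
  (star hA.1.eigenvectorUnitary : Matrix n n 𝕜)

/-- The Euclidean (ℓ2) norm of a vector in `ℝ^d`. -/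
def norm2 {d : ℕ} (x : Fin d → ℝ) : ℝ := Real.sqrt (x ⬝ᵥ x)

lemma herm_transpose' {d : ℕ} {M : Matrix (Fin d) (Fin d) ℝ} (hM : M.IsHermitian) : Mᵀ = M := by
  rw [← conjTranspose_eq_transpose_of_trivial]; exact hM

lemma sqrt_transpose' {d : ℕ} {M : Matrix (Fin d) (Fin d) ℝ} (hM : M.PosSemidef) :
    (hM.sqrt)ᵀ = hM.sqrt := by
  rw [← conjTranspose_eq_transpose_of_trivial]
  unfold Matrix.PosSemidef.sqrt
  simp only [conjTranspose_mul, diagonal_conjTranspose, conjTranspose_conjTranspose, star_trivial, Matrix.star_eq_conjTranspose,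
    mul_assoc]

lemma Matrix.PosSemidef.sqrt_mul_self {d : ℕ} {M : Matrix (Fin d) (Fin d) ℝ} (hM : M.PosSemidef) :
    hM.sqrt * hM.sqrt = M := by
  unfold Matrix.PosSemidef.sqrt
  conv_rhs => rw [hM.1.spectral_theorem, Unitary.conjStarAlgAut_apply]
  have hU : (star hM.1.eigenvectorUnitary : Matrix (Fin d) (Fin d) ℝ) * hM.1.eigenvectorUnitary.1 = 1 :=
    Unitary.coe_star_mul_self _
  rw [show ∀ A B C D E F : Matrix (Fin d) (Fin d) ℝ, A * B * C * (D * E * F) = A * (B * (C * D) * E) * F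
    from fun A B C D E F => by simp only [Matrix.mul_assoc], hU, Matrix.mul_one, diagonal_mul_diagonal]
  congr 3
  ext i
  simp [Real.mul_self_sqrt (hM.eigenvalues_nonneg i)]

lemma symm_dot' {d : ℕ} {S : Matrix (Fin d) (Fin d) ℝ} (hS : Sᵀ = S) (x y : Fin d → ℝ) :
    x ⬝ᵥ (S *ᵥ y) = (S *ᵥ x) ⬝ᵥ y := by
  have h : x ᵥ* S = S *ᵥ x := by conv_lhs => rw [← hS, vecMul_transpose]
  rw [dotProduct_mulVec, h]

lemma quad_nonneg' {d : ℕ} {M : Matrix (Fin d) (Fin d) ℝ} (hM : M.PosSemidef) (x : Fin d → ℝ) :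
    0 ≤ x ⬝ᵥ (M *ᵥ x) := by simpa using hM.re_dotProduct_nonneg x

lemma dot_cs' {d : ℕ} (a b : Fin d → ℝ) :
    a ⬝ᵥ b ≤ Real.sqrt (a ⬝ᵥ a) * Real.sqrt (b ⬝ᵥ b) := by
  have h := Finset.sum_mul_sq_le_sq_mul_sq Finset.univ a b
  have h1 : a ⬝ᵥ b ≤ |a ⬝ᵥ b| := le_abs_self _
  have h2 : |a ⬝ᵥ b| = Real.sqrt ((a ⬝ᵥ b)^2) := (Real.sqrt_sq_eq_abs _).symm
  have h3 : (a ⬝ᵥ b)^2 ≤ (a ⬝ᵥ a) * (b ⬝ᵥ b) := by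
    simpa [dotProduct, pow_two, Finset.mul_sum, Finset.sum_mul] using h
  have ha : 0 ≤ a ⬝ᵥ a := by
    simp only [dotProduct]
    exact Finset.sum_nonneg fun i _ => mul_self_nonneg _
  calc a ⬝ᵥ b ≤ Real.sqrt ((a ⬝ᵥ b)^2) := by rw [← h2]; exact h1
    _ ≤ Real.sqrt ((a ⬝ᵥ a) * (b ⬝ᵥ b)) := Real.sqrt_le_sqrt h3
    _ = _ := Real.sqrt_mul ha _

lemma sqrt_quad' {d : ℕ} {M : Matrix (Fin d) (Fin d) ℝ} (hM : M.PosSemidef) (v : Fin d → ℝ) :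
    (hM.sqrt *ᵥ v) ⬝ᵥ (hM.sqrt *ᵥ v) = v ⬝ᵥ (M *ᵥ v) := by
  have hS : (hM.sqrt)ᵀ = hM.sqrt := sqrt_transpose' hM
  rw [symm_dot' hS, mulVec_mulVec, hM.sqrt_mul_self, dotProduct_comm]

lemma psd_cs' {d : ℕ} {M : Matrix (Fin d) (Fin d) ℝ} (hM : M.PosSemidef) (x y : Fin d → ℝ) :
    x ⬝ᵥ (M *ᵥ y) ≤ Real.sqrt (x ⬝ᵥ (M *ᵥ x)) * Real.sqrt (y ⬝ᵥ (M *ᵥ y)) := by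
  have hS : (hM.sqrt)ᵀ = hM.sqrt := sqrt_transpose' hM
  have key : (hM.sqrt *ᵥ x) ⬝ᵥ (hM.sqrt *ᵥ y) = x ⬝ᵥ (M *ᵥ y) := by
    rw [← symm_dot' hS, mulVec_mulVec, hM.sqrt_mul_self]
  rw [← key, ← sqrt_quad' hM x, ← sqrt_quad' hM y]
  exact dot_cs' _ _

lemma polar_cs' {d : ℕ} {Hm B : Matrix (Fin d) (Fin d) ℝ} (hH : Hm.PosDef)
    (hBs : Bᵀ = B) {ε : ℝ} (hε : 0 ≤ ε)
    (hub : ∀ x, x ⬝ᵥ (B *ᵥ x) ≤ ε * (x ⬝ᵥ (Hm *ᵥ x)))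
    (hlb : ∀ x, -(ε * (x ⬝ᵥ (Hm *ᵥ x))) ≤ x ⬝ᵥ (B *ᵥ x))
    (u v : Fin d → ℝ) :
    u ⬝ᵥ (B *ᵥ v) ≤ ε * Real.sqrt (u ⬝ᵥ (Hm *ᵥ u)) * Real.sqrt (v ⬝ᵥ (Hm *ᵥ v)) := by
  by_cases hu : u = 0
  · subst hu; simp only [zero_dotProduct]; positivity
  by_cases hv : v = 0
  · subst hv; simp only [mulVec_zero, dotProduct_zero]; positivity
  have hqu : 0 < u ⬝ᵥ (Hm *ᵥ u) := by simpa using hH.re_dotProduct_pos hu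
  have hqv : 0 < v ⬝ᵥ (Hm *ᵥ v) := by simpa using hH.re_dotProduct_pos hv
  set a := Real.sqrt (u ⬝ᵥ (Hm *ᵥ u)) with ha
  set b := Real.sqrt (v ⬝ᵥ (Hm *ᵥ v)) with hb
  have ha0 : 0 < a := Real.sqrt_pos.mpr hqu
  have hb0 : 0 < b := Real.sqrt_pos.mpr hqv
  have ha2 : a ^ 2 = u ⬝ᵥ (Hm *ᵥ u) := Real.sq_sqrt hqu.le
  have hb2 : b ^ 2 = v ⬝ᵥ (Hm *ᵥ v) := Real.sq_sqrt hqv.le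
  set t := Real.sqrt (b / a) with htdef
  have ht0 : 0 < t := Real.sqrt_pos.mpr (by positivity)
  have ht2 : t ^ 2 = b / a := Real.sq_sqrt (by positivity)
  set x := t • u with hx
  set y := t⁻¹ • v with hy
  have hswap : ∀ p r : Fin d → ℝ, r ⬝ᵥ (B *ᵥ p) = p ⬝ᵥ (B *ᵥ r) := fun p r => by
    rw [symm_dot' hBs, dotProduct_comm]
  have hbil : (x + y) ⬝ᵥ (B *ᵥ (x + y)) - (x - y) ⬝ᵥ (B *ᵥ (x - y))
      = 4 * (x ⬝ᵥ (B *ᵥ y)) := by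
    simp only [mulVec_add, mulVec_sub, dotProduct_add, dotProduct_sub,
      add_dotProduct, sub_dotProduct]
    linarith [hswap x y]
  have hHs : Hmᵀ = Hm := herm_transpose' hH.1
  have hswapH : ∀ p r : Fin d → ℝ, r ⬝ᵥ (Hm *ᵥ p) = p ⬝ᵥ (Hm *ᵥ r) := fun p r => by
    rw [symm_dot' hHs, dotProduct_comm]
  have hquad : (x + y) ⬝ᵥ (Hm *ᵥ (x + y)) + (x - y) ⬝ᵥ (Hm *ᵥ (x - y))
      = 2 * (x ⬝ᵥ (Hm *ᵥ x)) + 2 * (y ⬝ᵥ (Hm *ᵥ y)) := by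
    simp only [mulVec_add, mulVec_sub, dotProduct_add, dotProduct_sub,
      add_dotProduct, sub_dotProduct]
    linarith [hswapH x y]
  have hqx : x ⬝ᵥ (Hm *ᵥ x) = t ^ 2 * (u ⬝ᵥ (Hm *ᵥ u)) := by
    simp only [hx, mulVec_smul, smul_dotProduct, dotProduct_smul, smul_eq_mul]
    ring
  have hqy : y ⬝ᵥ (Hm *ᵥ y) = (t ^ 2)⁻¹ * (v ⬝ᵥ (Hm *ᵥ v)) := by
    simp only [hy, mulVec_smul, smul_dotProduct, dotProduct_smul, smul_eq_mul]
    ring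
  have hxy : x ⬝ᵥ (B *ᵥ y) = u ⬝ᵥ (B *ᵥ v) := by
    simp only [hx, hy, mulVec_smul, smul_dotProduct, dotProduct_smul, smul_eq_mul]
    field_simp
  have h4 : 4 * (x ⬝ᵥ (B *ᵥ y)) ≤ ε * (2 * (x ⬝ᵥ (Hm *ᵥ x)) + 2 * (y ⬝ᵥ (Hm *ᵥ y))) := by
    have e1 := hub (x + y)
    have e2 := hlb (x - y)
    have : 4 * (x ⬝ᵥ (B *ᵥ y)) ≤ ε * ((x + y) ⬝ᵥ (Hm *ᵥ (x + y)) + (x - y) ⬝ᵥ (Hm *ᵥ (x - y))) := by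
      rw [mul_add]; linarith
    rwa [hquad] at this
  have hqx' : x ⬝ᵥ (Hm *ᵥ x) = a * b := by
    rw [hqx, ht2, ← ha2]; field_simp
  have hqy' : y ⬝ᵥ (Hm *ᵥ y) = a * b := by
    rw [hqy, ht2, ← hb2]; field_simp
  rw [hqx', hqy', hxy] at h4
  nlinarith [h4]

set_option maxHeartbeats 2000000 in
/-- the Inexact Solution lemma for sub-sampled Newton. An inexact solution
`p̃′` of `H̃p = g` meeting the relative stopping criterion still nearly minimizes the
auxiliary quadratic `φ(p) = pᵀHp − 2pᵀg`, with `α₀ = (ε + ε₀)/(1 − ε − ε₀)`. -/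
theorem inexact_newton_direction_suboptimality {d : ℕ}
    (H Htil : Matrix (Fin d) (Fin d) ℝ) (hH : H.PosDef) (hHtil : Htil.PosDef)
    (ε : ℝ) (hε : 0 < ε ∧ ε < 1)
    (happrox : (Htil - (1 - ε) • H).PosSemidef ∧ ((1 + ε) • H - Htil).PosSemidef)
    (g : Fin d → ℝ)
    (ε₀ : ℝ) (hε₀ : 0 < ε₀ ∧ ε₀ < 1) (hsum : ε + ε₀ < 1)
    (ptil' : Fin d → ℝ)
    (hstop : norm2 (hHtil.posSemidef.sqrt *ᵥ (ptil' - Htil⁻¹ *ᵥ g)) ≤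
      ε₀ * norm2 (hHtil.posSemidef.sqrt *ᵥ (Htil⁻¹ *ᵥ g))) :
    let φ : (Fin d → ℝ) → ℝ := fun p => p ⬝ᵥ (H *ᵥ p) - 2 * (p ⬝ᵥ g)
    let pstar : Fin d → ℝ := H⁻¹ *ᵥ g
    let α₀ : ℝ := (ε + ε₀) / (1 - ε - ε₀)
    (∀ p, φ pstar ≤ φ p) ∧ φ pstar ≤ φ ptil' ∧ φ ptil' ≤ (1 - α₀ ^ 2) * φ pstar := by
  intro φ pstar α₀
  obtain ⟨hε1, hε2⟩ := hε
  obtain ⟨hε01, hε02⟩ := hε₀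
  have hc : (0:ℝ) < 1 - ε := by linarith
  have hc' : (0:ℝ) < 1 - ε - ε₀ := by linarith
  set ptil : Fin d → ℝ := Htil⁻¹ *ᵥ g with hptil
  -- basic linear algebra facts
  have hHdet : IsUnit H.det := isUnit_iff_ne_zero.mpr hH.det_pos.ne'
  have hTdet : IsUnit Htil.det := isUnit_iff_ne_zero.mpr hHtil.det_pos.ne'
  have hHg : H *ᵥ pstar = g := by
    show H *ᵥ (H⁻¹ *ᵥ g) = g
    rw [mulVec_mulVec, Matrix.mul_nonsing_inv _ hHdet, one_mulVec]
  have hTg : Htil *ᵥ ptil = g := by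
    rw [hptil, mulVec_mulVec, Matrix.mul_nonsing_inv _ hTdet, one_mulVec]
  have hHs : Hᵀ = H := herm_transpose' hH.1
  have hTs : Htilᵀ = Htil := herm_transpose' hHtil.1
  have hswapH : ∀ p r : Fin d → ℝ, r ⬝ᵥ (H *ᵥ p) = p ⬝ᵥ (H *ᵥ r) := fun p r => by
    rw [symm_dot' hHs, dotProduct_comm]
  -- quadratic form comparisons from happrox
  have hlow : ∀ x : Fin d → ℝ, (1 - ε) * (x ⬝ᵥ (H *ᵥ x)) ≤ x ⬝ᵥ (Htil *ᵥ x) := by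
    intro x
    have h := quad_nonneg' happrox.1 x
    simp only [sub_mulVec, smul_mulVec, dotProduct_sub, dotProduct_smul,
      smul_eq_mul] at h
    linarith
  have hub : ∀ x : Fin d → ℝ, x ⬝ᵥ ((H - Htil) *ᵥ x) ≤ ε * (x ⬝ᵥ (H *ᵥ x)) := by
    intro x
    have h := quad_nonneg' happrox.1 x
    simp only [sub_mulVec, smul_mulVec, dotProduct_sub, dotProduct_smul,
      smul_eq_mul] at h ⊢
    linarith
  have hlb : ∀ x : Fin d → ℝ, -(ε * (x ⬝ᵥ (H *ᵥ x))) ≤ x ⬝ᵥ ((H - Htil) *ᵥ x) := by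
    intro x
    have h := quad_nonneg' happrox.2 x
    simp only [sub_mulVec, smul_mulVec, dotProduct_sub, dotProduct_smul,
      add_smul, one_smul, add_mulVec, dotProduct_add, smul_eq_mul] at h ⊢
    linarith
  have hBs : (H - Htil)ᵀ = H - Htil := by rw [transpose_sub, hHs, hTs]
  -- notation for the quadratic forms
  set Q : ℝ := pstar ⬝ᵥ (H *ᵥ pstar) with hQdef
  have hQ0 : 0 ≤ Q := quad_nonneg' hH.posSemidef pstar
  set sQ : ℝ := Real.sqrt Q with hsQ
  have hsQ0 : 0 ≤ sQ := Real.sqrt_nonneg _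
  have hsQ2 : sQ ^ 2 = Q := Real.sq_sqrt hQ0
  set u : Fin d → ℝ := ptil - pstar with hu
  set e : Fin d → ℝ := ptil' - ptil with he
  set w : Fin d → ℝ := ptil' - pstar with hw
  have hwsum : w = e + u := by rw [hw, he, hu]; abel
  -- rewrite the stopping criterion
  have hstop' : Real.sqrt (e ⬝ᵥ (Htil *ᵥ e)) ≤ ε₀ * Real.sqrt (ptil ⬝ᵥ (Htil *ᵥ ptil)) := by
    have h1 := sqrt_quad' hHtil.posSemidef e
    have h2 := sqrt_quad' hHtil.posSemidef ptil
    unfold norm2 at hstop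
    rw [← h1, ← h2]
    exact hstop
  -- Step A : qT u = u ⬝ᵥ (H - Htil) *ᵥ pstar
  have hstepA : u ⬝ᵥ (Htil *ᵥ u) = u ⬝ᵥ ((H - Htil) *ᵥ pstar) := by
    have h1 : Htil *ᵥ u = g - Htil *ᵥ pstar := by
      rw [hu, mulVec_sub, hTg]
    have h2 : (H - Htil) *ᵥ pstar = g - Htil *ᵥ pstar := by
      rw [sub_mulVec, hHg]
    rw [h1, h2]
  -- polarization bound
  have hpolar : u ⬝ᵥ ((H - Htil) *ᵥ pstar) ≤ ε * Real.sqrt (u ⬝ᵥ (H *ᵥ u)) * sQ :=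
    polar_cs' hH hBs hε1.le hub hlb u pstar
  set au : ℝ := Real.sqrt (u ⬝ᵥ (H *ᵥ u)) with hau
  have hau0 : 0 ≤ au := Real.sqrt_nonneg _
  have hau2 : au ^ 2 = u ⬝ᵥ (H *ᵥ u) := Real.sq_sqrt (quad_nonneg' hH.posSemidef u)
  have hqTu0 : 0 ≤ u ⬝ᵥ (Htil *ᵥ u) := quad_nonneg' hHtil.posSemidef u
  have hqTu : u ⬝ᵥ (Htil *ᵥ u) ≤ ε * au * sQ := by rw [hstepA]; exact hpolar
  -- (1-ε) au ≤ ε sQ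
  have haub : (1 - ε) * au ≤ ε * sQ := by
    rcases eq_or_lt_of_le hau0 with h0 | h0
    · rw [← h0, mul_zero]; exact mul_nonneg hε1.le hsQ0
    · have hl := hlow u
      rw [← hau2] at hl
      have key : ((1 - ε) * au) * au ≤ (ε * sQ) * au := by linarith [hl, hqTu]
      exact (mul_le_mul_iff_of_pos_right h0).mp key
  -- R := sqrt (Q/(1-ε))
  set R : ℝ := Real.sqrt (Q / (1 - ε)) with hR
  have hR0 : 0 ≤ R := Real.sqrt_nonneg _
  have hR2 : R ^ 2 = Q / (1 - ε) := Real.sq_sqrt (div_nonneg hQ0 hc.le)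
  -- bu ≤ ε R
  set bu : ℝ := Real.sqrt (u ⬝ᵥ (Htil *ᵥ u)) with hbu
  have hbu0 : 0 ≤ bu := Real.sqrt_nonneg _
  have hbu2 : bu ^ 2 = u ⬝ᵥ (Htil *ᵥ u) := Real.sq_sqrt hqTu0
  have hbuB : bu ≤ ε * R := by
    have h1 : u ⬝ᵥ (Htil *ᵥ u) ≤ (ε * R) ^ 2 := by
      have h2 : (ε * R) ^ 2 = ε ^ 2 * (Q / (1 - ε)) := by rw [mul_pow, hR2]
      rw [h2]
      have h3 : (1 - ε) * (u ⬝ᵥ (Htil *ᵥ u)) ≤ ε ^ 2 * Q := by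
        have h4 : (1 - ε) * (u ⬝ᵥ (Htil *ᵥ u)) ≤ (1 - ε) * (ε * au * sQ) :=
          mul_le_mul_of_nonneg_left hqTu hc.le
        have h5 : (ε * sQ) * ((1 - ε) * au) ≤ (ε * sQ) * (ε * sQ) :=
          mul_le_mul_of_nonneg_left haub (mul_nonneg hε1.le hsQ0)
        have h6 : ε ^ 2 * sQ ^ 2 = ε ^ 2 * Q := by rw [hsQ2]
        linarith [h4, h5, h6]
      rw [← mul_div_assoc, le_div_iff₀ hc]
      linarith [h3]
    calc bu = Real.sqrt (u ⬝ᵥ (Htil *ᵥ u)) := hbu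
      _ ≤ Real.sqrt ((ε * R) ^ 2) := Real.sqrt_le_sqrt h1
      _ = ε * R := Real.sqrt_sq (mul_nonneg hε1.le hR0)
  -- bp ≤ R
  set bp : ℝ := Real.sqrt (ptil ⬝ᵥ (Htil *ᵥ ptil)) with hbp
  have hqTp0 : 0 ≤ ptil ⬝ᵥ (Htil *ᵥ ptil) := quad_nonneg' hHtil.posSemidef ptil
  have hbp0 : 0 ≤ bp := Real.sqrt_nonneg _
  have hbp2 : bp ^ 2 = ptil ⬝ᵥ (Htil *ᵥ ptil) := Real.sq_sqrt hqTp0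
  have hbpB : bp ≤ R := by
    set P : ℝ := ptil ⬝ᵥ (Htil *ᵥ ptil) with hP
    have hPg : P = ptil ⬝ᵥ g := by rw [hP]; rw [hTg]
    have hPcs : P ≤ Real.sqrt (ptil ⬝ᵥ (H *ᵥ ptil)) * sQ := by
      rw [hPg, ← hHg]
      exact psd_cs' hH.posSemidef ptil pstar
    have hqHp0 : 0 ≤ ptil ⬝ᵥ (H *ᵥ ptil) := quad_nonneg' hH.posSemidef ptil
    have hP2 : P ^ 2 ≤ (ptil ⬝ᵥ (H *ᵥ ptil)) * Q := by
      have := mul_self_le_mul_self hqTp0 hPcs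
      calc P ^ 2 = P * P := sq P
        _ ≤ (Real.sqrt (ptil ⬝ᵥ (H *ᵥ ptil)) * sQ) * (Real.sqrt (ptil ⬝ᵥ (H *ᵥ ptil)) * sQ) := this
        _ = Real.sqrt (ptil ⬝ᵥ (H *ᵥ ptil)) ^ 2 * sQ ^ 2 := by ring
        _ = (ptil ⬝ᵥ (H *ᵥ ptil)) * Q := by rw [Real.sq_sqrt hqHp0, hsQ2]
    have hPlow : (1 - ε) * (ptil ⬝ᵥ (H *ᵥ ptil)) ≤ P := hlow ptil
    have hPB : P ≤ Q / (1 - ε) := by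
      rcases eq_or_lt_of_le hqTp0 with h0 | h0
      · rw [← h0]; exact div_nonneg hQ0 hc.le
      · rw [le_div_iff₀ hc]
        have k1 : P ^ 2 * (1 - ε) ≤ ((ptil ⬝ᵥ (H *ᵥ ptil)) * Q) * (1 - ε) :=
          mul_le_mul_of_nonneg_right hP2 hc.le
        have k2 : ((1 - ε) * (ptil ⬝ᵥ (H *ᵥ ptil))) * Q ≤ P * Q :=
          mul_le_mul_of_nonneg_right hPlow hQ0
        have k3 : P * (P * (1 - ε)) ≤ P * Q := by linarith [k1, k2]
        exact (mul_le_mul_iff_of_pos_left h0).mp k3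
    calc bp = Real.sqrt P := hbp
      _ ≤ Real.sqrt (Q / (1 - ε)) := Real.sqrt_le_sqrt hPB
      _ = R := hR.symm
  -- be ≤ ε₀ bp
  set be : ℝ := Real.sqrt (e ⬝ᵥ (Htil *ᵥ e)) with hbe
  have hbe0 : 0 ≤ be := Real.sqrt_nonneg _
  have hbe2 : be ^ 2 = e ⬝ᵥ (Htil *ᵥ e) := Real.sq_sqrt (quad_nonneg' hHtil.posSemidef e)
  have hbeB : be ≤ ε₀ * bp := hstop'
  -- triangle inequality : sqrt (qT w) ≤ be + bu
  have hqTw0 : 0 ≤ w ⬝ᵥ (Htil *ᵥ w) := quad_nonneg' hHtil.posSemidef w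
  have htri : w ⬝ᵥ (Htil *ᵥ w) ≤ (be + bu) ^ 2 := by
    have hexp : w ⬝ᵥ (Htil *ᵥ w)
        = e ⬝ᵥ (Htil *ᵥ e) + 2 * (e ⬝ᵥ (Htil *ᵥ u)) + u ⬝ᵥ (Htil *ᵥ u) := by
      rw [hwsum]
      have hswapT : u ⬝ᵥ (Htil *ᵥ e) = e ⬝ᵥ (Htil *ᵥ u) := by
        rw [symm_dot' hTs, dotProduct_comm]
      simp only [mulVec_add, dotProduct_add, add_dotProduct]
      linarith [hswapT]
    have hcs : e ⬝ᵥ (Htil *ᵥ u) ≤ be * bu := by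
      rw [hbe, hbu]; exact psd_cs' hHtil.posSemidef e u
    rw [hexp, ← hbe2, ← hbu2]; linarith [hcs]
  -- the main bound : qH w ≤ α₀² Q
  have hbwB : w ⬝ᵥ (Htil *ᵥ w) ≤ ((ε + ε₀) * R) ^ 2 := by
    have h1 : be + bu ≤ (ε + ε₀) * R := by
      linarith [hbeB, mul_le_mul_of_nonneg_left hbpB hε01.le, hbuB]
    have h2 := mul_self_le_mul_self (add_nonneg hbe0 hbu0) h1
    linarith [h2, htri]
  have hqHw0 : 0 ≤ w ⬝ᵥ (H *ᵥ w) := quad_nonneg' hH.posSemidef w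
  have hkey : w ⬝ᵥ (H *ᵥ w) ≤ α₀ ^ 2 * Q := by
    have h1 : (1 - ε) * (w ⬝ᵥ (H *ᵥ w)) ≤ (ε + ε₀) ^ 2 * (Q / (1 - ε)) := by
      have := hlow w
      calc (1 - ε) * (w ⬝ᵥ (H *ᵥ w)) ≤ w ⬝ᵥ (Htil *ᵥ w) := hlow w
        _ ≤ ((ε + ε₀) * R) ^ 2 := hbwB
        _ = (ε + ε₀) ^ 2 * (Q / (1 - ε)) := by rw [mul_pow, hR2]
    have h2 : (w ⬝ᵥ (H *ᵥ w)) * (1 - ε) ^ 2 ≤ (ε + ε₀) ^ 2 * Q := by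
      have h3 : (1 - ε) * ((1 - ε) * (w ⬝ᵥ (H *ᵥ w))) ≤ (1 - ε) * ((ε + ε₀) ^ 2 * (Q / (1 - ε))) :=
        mul_le_mul_of_nonneg_left h1 hc.le
      have h4 : (1 - ε) * ((ε + ε₀) ^ 2 * (Q / (1 - ε))) = (ε + ε₀) ^ 2 * Q := by
        field_simp
      linarith [h3, h4]
    have h5 : (w ⬝ᵥ (H *ᵥ w)) * (1 - ε - ε₀) ^ 2 ≤ (w ⬝ᵥ (H *ᵥ w)) * (1 - ε) ^ 2 := by
      apply mul_le_mul_of_nonneg_left _ hqHw0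
      exact pow_le_pow_left₀ hc'.le (by linarith) 2
    have hα : α₀ ^ 2 * Q = (ε + ε₀) ^ 2 * Q / (1 - ε - ε₀) ^ 2 := by
      show ((ε + ε₀) / (1 - ε - ε₀)) ^ 2 * Q = _
      rw [div_pow, div_mul_eq_mul_div]
    rw [hα, le_div_iff₀ (by positivity : (0:ℝ) < (1 - ε - ε₀) ^ 2)]
    linarith [h5, h2]
  -- the φ identity
  have hφ : ∀ p, φ p = p ⬝ᵥ (H *ᵥ p) - 2 * (p ⬝ᵥ g) := fun p => rfl
  have hpg : pstar ⬝ᵥ g = Q := by rw [hQdef]; conv_lhs => rw [← hHg]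
  have hphi : ∀ p, φ p = (p - pstar) ⬝ᵥ (H *ᵥ (p - pstar)) - Q := by
    intro p
    have h1 : p ⬝ᵥ (H *ᵥ pstar) = p ⬝ᵥ g := by rw [hHg]
    have h2 : pstar ⬝ᵥ (H *ᵥ p) = p ⬝ᵥ g := by rw [hswapH p pstar, h1]
    rw [hφ p]
    simp only [mulVec_sub, dotProduct_sub, sub_dotProduct]
    rw [h1, h2, ← hQdef]
    ring
  have hphistar : φ pstar = -Q := by
    rw [hphi pstar]
    simp
  refine ⟨?_, ?_, ?_⟩
  · intro p
    rw [hphistar, hphi p]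
    have := quad_nonneg' hH.posSemidef (p - pstar)
    linarith
  · rw [hphistar, hphi ptil']
    have := quad_nonneg' hH.posSemidef (ptil' - pstar)
    linarith
  · rw [hphistar, hphi ptil', ← hw,
      show (1 - α₀ ^ 2) * (-Q) = -Q + α₀ ^ 2 * Q from by ring]
    linarith [hkey]
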